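/- arXiv:2508.01162 — 2 statements merged into one kernel-verified Lean document; each statement's English description precedes it below -/
import Mathlib

section
/- Let φ : [k₀, ∞) → [0, ∞) be nonincreasing and suppose there exist constants C > 0 and ε > 0 such that for all h > k ≥ k₀: φ(h) ≤ C · (h/(h−k)) · (h−k)^{−ε} · φ(k)^{1+ε}. Then there exists d > 0 (depending on C, ε, k₀, φ(k₀)) such that φ(k₀ + d) = 0. -/
open Real Filter

private lemma aux_pow_rpow (x : ℝ) (hx : 0 ≤ x) (y : ℝ) (n : ℕ) :
    (x ^ n) ^ y = (x ^ y) ^ n := by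
  rw [← Real.rpow_natCast x n, ← Real.rpow_mul hx, mul_comm,
    Real.rpow_mul hx, Real.rpow_natCast]

theorem stmt_7 (k₀ C ε : ℝ) (hC : 0 < C) (hε : 0 < ε) (φ : ℝ → ℝ)
    (hmono : AntitoneOn φ (Set.Ici k₀))
    (hnonneg : ∀ k, k₀ ≤ k → 0 ≤ φ k)
    (hiter : ∀ h k : ℝ, k₀ ≤ k → k < h →
      φ h ≤ C * (h / (h - k)) * (h - k) ^ (-ε) * φ k ^ (1 + ε)) :
    ∃ d : ℝ, 0 < d ∧ φ (k₀ + d) = 0 := by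
  by_cases hφ₀ : φ k₀ ≤ 0
  · refine ⟨1, one_pos, ?_⟩
    have h1 : φ (k₀ + 1) ≤ φ k₀ :=
      hmono (Set.mem_Ici.2 le_rfl) (Set.mem_Ici.2 (by linarith)) (by linarith)
    exact le_antisymm (by linarith) (hnonneg _ (by linarith))
  push_neg at hφ₀
  rcases lt_or_ge k₀ 0 with hneg | hk0
  · -- negative k₀ : the right hand side is nonpositive at h = k₀/2 < 0
    refine ⟨-k₀ / 2, by linarith, ?_⟩
    have hh1 : k₀ < k₀ + -k₀ / 2 := by linarith
    have h1 := hiter (k₀ + -k₀ / 2) k₀ le_rfl hh1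
    have hfrac : (k₀ + -k₀ / 2) / ((k₀ + -k₀ / 2) - k₀) ≤ 0 :=
      div_nonpos_of_nonpos_of_nonneg (by linarith) (by linarith)
    have a1 : 0 ≤ ((k₀ + -k₀ / 2) - k₀) ^ (-ε) := Real.rpow_nonneg (by linarith) _
    have a2 : 0 ≤ φ k₀ ^ (1 + ε) := Real.rpow_nonneg (hnonneg k₀ le_rfl) _
    have b1 : C * ((k₀ + -k₀ / 2) / ((k₀ + -k₀ / 2) - k₀)) ≤ 0 :=
      mul_nonpos_iff.mpr (Or.inl ⟨hC.le, hfrac⟩)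
    have b2 : C * ((k₀ + -k₀ / 2) / ((k₀ + -k₀ / 2) - k₀)) * ((k₀ + -k₀ / 2) - k₀) ^ (-ε) ≤ 0 :=
      mul_nonpos_iff.mpr (Or.inr ⟨b1, a1⟩)
    have b3 : C * ((k₀ + -k₀ / 2) / ((k₀ + -k₀ / 2) - k₀)) * ((k₀ + -k₀ / 2) - k₀) ^ (-ε)
        * φ k₀ ^ (1 + ε) ≤ 0 := mul_nonpos_iff.mpr (Or.inr ⟨b2, a2⟩)
    exact le_antisymm (le_trans h1 b3) (hnonneg _ hh1.le)
  · -- main case : 0 ≤ k₀ and φ k₀ > 0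
    set φ₀ := φ k₀ with hφ₀def
    set r : ℝ := (2:ℝ) ^ (-(1 + ε) / ε) with hrdef
    have hr0 : 0 < r := Real.rpow_pos_of_pos two_pos _
    have hr1 : r < 1 := by
      apply Real.rpow_lt_one_of_one_lt_of_neg one_lt_two
      apply div_neg_of_neg_of_pos (by linarith) hε
    set u : ℝ := 2 * (2:ℝ) ^ ε with hudef
    have hu0 : 0 < u := by positivity
    have h2e : (2:ℝ) * 2 ^ ε = 2 ^ (1 + ε) := by
      rw [Real.rpow_add two_pos, Real.rpow_one]
    have hur : u * r ^ (1 + ε) = r := by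
      rw [hudef, hrdef, h2e, ← Real.rpow_mul (by norm_num : (0:ℝ) ≤ 2),
        ← Real.rpow_add two_pos]
      congr 1
      field_simp
      ring
    set A : ℝ := C * φ₀ ^ ε * (u / r) with hAdef
    have hA : 0 < A := by positivity
    set d : ℝ := max 1 ((A * (k₀ + 1)) ^ (1 / ε)) with hddef
    have hd1 : 1 ≤ d := le_max_left _ _
    have hd0 : 0 < d := lt_of_lt_of_le one_pos hd1
    have hAk : 0 < A * (k₀ + 1) := mul_pos hA (by linarith)
    have hkey : A * (k₀ + d) ≤ d ^ (1 + ε) := by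
      have h2 : (A * (k₀ + 1)) ^ (1 / ε) ≤ d := le_max_right _ _
      have h3 := Real.rpow_le_rpow (Real.rpow_nonneg hAk.le _) h2 hε.le
      rw [one_div, Real.rpow_inv_rpow hAk.le hε.ne'] at h3
      have h4 : k₀ + d ≤ (k₀ + 1) * d := by nlinarith
      calc A * (k₀ + d) ≤ A * ((k₀ + 1) * d) := by nlinarith
        _ = (A * (k₀ + 1)) * d := by ring
        _ ≤ d ^ ε * d := mul_le_mul_of_nonneg_right h3 hd0.le
        _ = d ^ (1 + ε) := by rw [Real.rpow_add hd0, Real.rpow_one]; ring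
    have hX : ∀ j : ℕ, u ^ (j + 1) * (r ^ (1 + ε)) ^ j = (u / r) * r ^ (j + 1) := by
      intro j
      induction j with
      | zero =>
        simp only [pow_one, pow_zero, mul_one]
        field_simp
        ring
      | succ n ih =>
        have e : u ^ (n + 1 + 1) * (r ^ (1 + ε)) ^ (n + 1)
            = (u ^ (n + 1) * (r ^ (1 + ε)) ^ n) * (u * r ^ (1 + ε)) := by ring
        rw [e, ih, hur]
        ring
    set K : ℕ → ℝ := fun j => k₀ + d * (1 - (2:ℝ)⁻¹ ^ j) with hKdef
    have hq0 : (0:ℝ) < (2:ℝ)⁻¹ := by norm_num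
    have hKmem : ∀ j, k₀ ≤ K j := by
      intro j
      have h5 : (2:ℝ)⁻¹ ^ j ≤ 1 := pow_le_one₀ (by norm_num) (by norm_num)
      simp only [hKdef]
      nlinarith
    have hKle : ∀ j, K j ≤ k₀ + d := by
      intro j
      have h5 := pow_pos hq0 j
      simp only [hKdef]
      nlinarith
    have hKlt : ∀ j, K j < K (j + 1) := by
      intro j
      have h5 : (0:ℝ) < (2:ℝ)⁻¹ ^ j := pow_pos hq0 j
      simp only [hKdef, pow_succ]
      nlinarith
    have hgap : ∀ j : ℕ, K (j + 1) - K j = d * (2:ℝ)⁻¹ ^ (j + 1) := by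
      intro j
      simp only [hKdef, pow_succ]
      ring
    have main : ∀ j : ℕ, φ (K j) ≤ φ₀ * r ^ j := by
      intro j
      induction j with
      | zero =>
        have : K 0 = k₀ := by simp [hKdef]
        rw [this]
        simp
        exact le_rfl
      | succ n ih =>
        have h1 := hiter (K (n + 1)) (K n) (hKmem n) (hKlt n)
        rw [hgap n] at h1
        set δ : ℝ := d * (2:ℝ)⁻¹ ^ (n + 1) with hδdef
        have hδ0 : 0 < δ := by positivity
        have h2 : C * (K (n + 1) / δ) * δ ^ (-ε) * φ (K n) ^ (1 + ε)
            ≤ C * ((k₀ + d) / δ) * δ ^ (-ε) * (φ₀ * r ^ n) ^ (1 + ε) := by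
          gcongr <;> first
            | exact Real.rpow_nonneg (hnonneg _ (hKmem n)) _
            | exact hnonneg _ (hKmem n)
            | exact hKle (n + 1)
            | exact ih
        have eq2 : δ ^ (-ε) = d ^ (-ε) * ((2:ℝ) ^ ε) ^ (n + 1) := by
          rw [hδdef, Real.mul_rpow hd0.le (by positivity),
            aux_pow_rpow _ (by norm_num : (0:ℝ) ≤ 2⁻¹)]
          congr 2
          rw [← Real.rpow_neg_one (2:ℝ), ← Real.rpow_mul (by norm_num : (0:ℝ) ≤ 2)]
          norm_num
        have eq3 : (φ₀ * r ^ n) ^ (1 + ε) = (φ₀ * φ₀ ^ ε) * (r ^ (1 + ε)) ^ n := by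
          rw [Real.mul_rpow hφ₀.le (by positivity), aux_pow_rpow r hr0.le,
            Real.rpow_add hφ₀, Real.rpow_one]
        have eq4 : d ^ (-(1 + ε)) = d⁻¹ * d ^ (-ε) := by
          rw [show -(1 + ε) = (-1) + (-ε) by ring, Real.rpow_add hd0, Real.rpow_neg_one]
        have h3 : C * ((k₀ + d) / δ) * δ ^ (-ε) * (φ₀ * r ^ n) ^ (1 + ε)
            = A * (k₀ + d) * d ^ (-(1 + ε)) * (φ₀ * r ^ (n + 1)) := by
          calc C * ((k₀ + d) / δ) * δ ^ (-ε) * (φ₀ * r ^ n) ^ (1 + ε)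
              = C * (k₀ + d) * (d⁻¹ * d ^ (-ε))
                * ((φ₀ * φ₀ ^ ε) * (u ^ (n + 1) * (r ^ (1 + ε)) ^ n)) := by
                rw [eq2, eq3, hδdef, hudef, inv_pow]
                have h2n : ((2:ℝ) ^ (n + 1)) ≠ 0 := by positivity
                field_simp
                ring
            _ = C * (k₀ + d) * (d⁻¹ * d ^ (-ε))
                * ((φ₀ * φ₀ ^ ε) * ((u / r) * r ^ (n + 1))) := by rw [hX n]
            _ = A * (k₀ + d) * d ^ (-(1 + ε)) * (φ₀ * r ^ (n + 1)) := by
                rw [hAdef, eq4]; ring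
        have h5 : A * (k₀ + d) * d ^ (-(1 + ε)) * (φ₀ * r ^ (n + 1))
            ≤ (d ^ (1 + ε) * d ^ (-(1 + ε))) * (φ₀ * r ^ (n + 1)) := by
          have hpos1 : (0:ℝ) ≤ d ^ (-(1 + ε)) := by positivity
          have hpos2 : (0:ℝ) ≤ φ₀ * r ^ (n + 1) := by positivity
          calc A * (k₀ + d) * d ^ (-(1 + ε)) * (φ₀ * r ^ (n + 1))
              = (A * (k₀ + d)) * (d ^ (-(1 + ε)) * (φ₀ * r ^ (n + 1))) := by ring
            _ ≤ d ^ (1 + ε) * (d ^ (-(1 + ε)) * (φ₀ * r ^ (n + 1))) := by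
                apply mul_le_mul_of_nonneg_right hkey
                positivity
            _ = (d ^ (1 + ε) * d ^ (-(1 + ε))) * (φ₀ * r ^ (n + 1)) := by ring
        have h6 : d ^ (1 + ε) * d ^ (-(1 + ε)) = 1 := by
          rw [← Real.rpow_add hd0, add_neg_cancel, Real.rpow_zero]
        calc φ (K (n + 1)) ≤ C * (K (n + 1) / δ) * δ ^ (-ε) * φ (K n) ^ (1 + ε) := h1
          _ ≤ C * ((k₀ + d) / δ) * δ ^ (-ε) * (φ₀ * r ^ n) ^ (1 + ε) := h2
          _ = A * (k₀ + d) * d ^ (-(1 + ε)) * (φ₀ * r ^ (n + 1)) := h3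
          _ ≤ (d ^ (1 + ε) * d ^ (-(1 + ε))) * (φ₀ * r ^ (n + 1)) := h5
          _ = φ₀ * r ^ (n + 1) := by rw [h6]; ring
    refine ⟨d, hd0, ?_⟩
    have hub : ∀ j : ℕ, φ (k₀ + d) ≤ φ₀ * r ^ j := fun j =>
      le_trans (hmono (hKmem j) (Set.mem_Ici.2 (by linarith)) (hKle j)) (main j)
    have htend : Tendsto (fun j : ℕ => φ₀ * r ^ j) atTop (nhds 0) := by
      have h := tendsto_pow_atTop_nhds_zero_of_lt_one hr0.le hr1
      simpa using h.const_mul φ₀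
    have hle : φ (k₀ + d) ≤ 0 := ge_of_tendsto' htend hub
    exact le_antisymm hle (hnonneg _ (by linarith))
end

section
/- Let n ≥ 3, Ω ⊂ ℝⁿ a bounded open set, and a ∈ L^{n/2}(Ω). Then the map G : X^{1,2}(Ω) → ℝ, G(u) = ∫_Ω a(x) u(x)² dx, is sequentially weakly continuous: if u_j ⇀ u weakly in X^{1,2}(Ω), then G(u_j) → G(u). -/
open MeasureTheory Filter
open scoped ENNReal NNReal

lemma sq_eLpNorm {α : Type*} [MeasurableSpace α] (μ : Measure α) (t : ℝ≥0∞) (f : α → ℝ) :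
    eLpNorm (fun x => f x ^ 2) t μ = eLpNorm f (t * ENNReal.ofReal 2) μ ^ (2:ℝ) := by
  have h := eLpNorm_norm_rpow f (μ := μ) (p := t) (q := 2) two_pos
  rw [← h]
  congr 1
  funext x
  rw [show (2:ℝ) = ((2:ℕ):ℝ) by norm_num, Real.rpow_natCast, Real.norm_eq_abs, sq_abs]

lemma abs_integral_le_toReal {α : Type*} [MeasurableSpace α] {μ : Measure α} {F : α → ℝ}
    (hF : Integrable F μ) : |∫ x, F x ∂μ| ≤ (eLpNorm F 1 μ).toReal := by
  rw [← Real.norm_eq_abs]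
  calc ‖∫ x, F x ∂μ‖ ≤ ∫ x, ‖F x‖ ∂μ := norm_integral_le_integral_norm _
  _ = (eLpNorm F 1 μ).toReal := by
      rw [eLpNorm_one_eq_lintegral_enorm, ← ofReal_integral_norm_eq_lintegral_enorm hF,
        ENNReal.toReal_ofReal (by positivity)]

lemma core {α : Type*} [MeasurableSpace α] {μ : Measure α} [IsFiniteMeasure μ]
    {q p' : ℝ≥0∞} (hq_top : q ≠ ∞) (hqp : 1/q + 1/p' = 1)
    {a : α → ℝ} (ha : MemLp a q μ)
    {f : ℕ → α → ℝ} {g : α → ℝ}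
    (hfm : ∀ j, AEStronglyMeasurable (f j) μ) (hgm : AEStronglyMeasurable g μ)
    {M : ℝ≥0∞} (hM : M ≠ ∞)
    (hMf : ∀ j, eLpNorm (fun x => f j x ^ 2) p' μ ≤ M)
    (hMg : eLpNorm (fun x => g x ^ 2) p' μ ≤ M)
    (hL2 : Tendsto (fun j => eLpNorm (f j - g) 2 μ) atTop (nhds 0)) :
    Tendsto (fun j => ∫ x, a x * f j x ^ 2 ∂μ) atTop (nhds (∫ x, a x * g x ^ 2 ∂μ)) := by
  have hp'1 : 1 ≤ p' := by
    rw [← ENNReal.inv_le_one, ← one_div]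
    calc 1/p' ≤ 1/q + 1/p' := le_add_self
    _ = 1 := hqp
  have hqp1 : (1:ℝ≥0∞)/1 = 1/q + 1/p' := by rw [hqp]; norm_num
  have hsqm : ∀ h : α → ℝ, AEStronglyMeasurable h μ →
      AEStronglyMeasurable (fun x => h x ^ 2) μ := by
    intro h hh
    have : (fun x => h x ^ 2) = fun x => h x * h x := by funext x; ring
    rw [this]; exact hh.mul hh
  have hmemf : ∀ j, MemLp (fun x => f j x ^ 2) p' μ :=
    fun j => ⟨hsqm _ (hfm j), (hMf j).trans_lt hM.lt_top⟩
  have hmemg : MemLp (fun x => g x ^ 2) p' μ := ⟨hsqm _ hgm, hMg.trans_lt hM.lt_top⟩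
  have hint : ∀ φ : α → ℝ, MemLp φ q μ → ∀ h : α → ℝ, MemLp h p' μ →
      Integrable (fun x => φ x * h x) μ := by
    intro φ hφ h hh
    have := hh.smul hφ (r := 1) (hpqr := ⟨by simpa [one_div] using hqp1.symm⟩)
    rw [memLp_one_iff_integrable] at this
    exact this
  have hholder : ∀ φ h : α → ℝ, AEStronglyMeasurable φ μ → AEStronglyMeasurable h μ →
      eLpNorm (fun x => φ x * h x) 1 μ ≤ eLpNorm φ q μ * eLpNorm h p' μ := by
    intro φ h hφ hh
    have := eLpNorm_smul_le_mul_eLpNorm (μ := μ) hh hφ (r := 1) (hpqr := ⟨by simpa [one_div] using hqp1.symm⟩)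
    exact this
  have hf1 : ∀ j, MemLp (fun x => f j x ^ 2) 1 μ :=
    fun j => (hmemf j).mono_exponent hp'1
  have hg1 : MemLp (fun x => g x ^ 2) 1 μ := hmemg.mono_exponent hp'1
  -- g ∈ L²
  have hsq1 : eLpNorm (fun x => g x ^ 2) 1 μ = eLpNorm g 2 μ ^ (2:ℝ) := by
    rw [sq_eLpNorm μ 1 g]; norm_num
  have hg2top : eLpNorm g 2 μ ≠ ∞ := by
    have := hg1.2
    rw [hsq1] at this
    exact ((ENNReal.rpow_lt_top_iff_of_pos two_pos).mp this).ne
  -- L¹ convergence of squares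
  have hL1 : Tendsto
      (fun j => eLpNorm ((fun x => f j x ^ 2) - fun x => g x ^ 2) 1 μ) atTop (nhds 0) := by
    set c := eLpNorm g 2 μ with hc
    have hbound : ∀ j, eLpNorm ((fun x => f j x ^ 2) - fun x => g x ^ 2) 1 μ ≤
        eLpNorm (f j - g) 2 μ * (eLpNorm (f j - g) 2 μ + (c + c)) := by
      intro j
      have heq : ((fun x => f j x ^ 2) - fun x => g x ^ 2) =
          (fun x => f j x - g x) • (fun x => f j x + g x) := by
        funext x; simp [Pi.smul_apply', smul_eq_mul]; ring
      rw [heq]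
      have h2 : (1:ℝ≥0∞)/1 = 1/2 + 1/2 := by rw [div_one, ENNReal.add_halves]
      have hH := eLpNorm_smul_le_mul_eLpNorm (μ := μ) (f := fun x => f j x + g x)
        (φ := fun x => f j x - g x) ((hfm j).add hgm) ((hfm j).sub hgm) (r := 1) (hpqr := ⟨by simpa [one_div] using h2.symm⟩)
      refine hH.trans (mul_le_mul' le_rfl ?_)
      calc eLpNorm (fun x => f j x + g x) 2 μ
          = eLpNorm ((f j - g) + fun x => g x + g x) 2 μ := by
            congr 1; funext x; simp only [Pi.add_apply, Pi.sub_apply]; ring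
      _ ≤ eLpNorm (f j - g) 2 μ + eLpNorm (fun x => g x + g x) 2 μ :=
            eLpNorm_add_le ((hfm j).sub hgm) (hgm.add hgm) one_le_two
      _ ≤ eLpNorm (f j - g) 2 μ + (c + c) :=
            add_le_add_right (eLpNorm_add_le hgm hgm one_le_two) _
    have hmul : Tendsto (fun j => eLpNorm (f j - g) 2 μ * (eLpNorm (f j - g) 2 μ + (c + c)))
        atTop (nhds 0) := by
      have hcc : (c + c) ≠ ∞ := by finiteness
      have h1 : Tendsto (fun j => eLpNorm (f j - g) 2 μ + (c + c)) atTop (nhds (0 + (c + c))) :=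
        hL2.add tendsto_const_nhds
      have := ENNReal.Tendsto.mul hL2 (Or.inr (by simpa using hcc)) h1 (Or.inr (by simp))
      simpa using this
    exact tendsto_of_tendsto_of_tendsto_of_le_of_le tendsto_const_nhds hmul
      (fun j => zero_le) hbound
  -- the ε-argument
  rw [Metric.tendsto_atTop]
  intro ε hε
  set Mr := M.toReal with hMr
  have hMr0 : 0 ≤ Mr := ENNReal.toReal_nonneg
  set ε₁ := ε / (4 * (Mr + 1)) with hε₁
  have hε₁pos : 0 < ε₁ := by positivity
  obtain ⟨s, hs, hsm⟩ := ha.exists_simpleFunc_eLpNorm_sub_lt hq_top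
    (show ENNReal.ofReal ε₁ ≠ 0 by simp [ENNReal.ofReal_eq_zero]; linarith)
  -- first/third terms
  have hterm : ∀ h : α → ℝ, MemLp h p' μ → eLpNorm h p' μ ≤ M →
      |∫ x, (a x - s x) * h x ∂μ| ≤ ε / 4 := by
    intro h hh hhM
    have hin : Integrable (fun x => (a x - s x) * h x) μ := hint _ (ha.sub hsm) _ hh
    calc |∫ x, (a x - s x) * h x ∂μ| ≤ (eLpNorm (fun x => (a x - s x) * h x) 1 μ).toReal :=
          abs_integral_le_toReal hin
    _ ≤ (ENNReal.ofReal ε₁ * M).toReal := by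
        apply ENNReal.toReal_mono (by finiteness)
        refine (hholder _ _ (ha.1.sub hsm.1) hh.1).trans ?_
        exact mul_le_mul' hs.le hhM
    _ = ε₁ * Mr := by
        rw [ENNReal.toReal_mul, ENNReal.toReal_ofReal hε₁pos.le]
    _ ≤ ε₁ * (Mr + 1) := by nlinarith
    _ = ε / 4 := by rw [hε₁]; field_simp
  -- middle term machinery
  obtain ⟨K, hK⟩ := s.exists_forall_norm_le
  set c : ℝ≥0 := ⟨max K 0, le_max_right _ _⟩ with hcdef
  have hKc : ∀ x, ‖s x‖ ≤ (c : ℝ) := fun x => (hK x).trans (le_max_left _ _)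
  have hmidb : ∀ j, |∫ x, s x * f j x ^ 2 ∂μ - ∫ x, s x * g x ^ 2 ∂μ| ≤
      ((c : ℝ≥0∞) * eLpNorm ((fun x => f j x ^ 2) - fun x => g x ^ 2) 1 μ).toReal := by
    intro j
    have hi1 : Integrable (fun x => s x * f j x ^ 2) μ := hint _ hsm _ (hmemf j)
    have hi2 : Integrable (fun x => s x * g x ^ 2) μ := hint _ hsm _ hmemg
    rw [← integral_sub hi1 hi2]
    refine (abs_integral_le_toReal (hi1.sub hi2)).trans ?_
    apply ENNReal.toReal_mono
      (ENNReal.mul_ne_top ENNReal.coe_ne_top ((hf1 j).sub hg1).2.ne)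
    refine (eLpNorm_le_nnreal_smul_eLpNorm_of_ae_le_mul (c := c)
      (g := (fun x => f j x ^ 2) - fun x => g x ^ 2)
      (Eventually.of_forall fun x => ?_) 1).trans (le_of_eq ?_)
    · show ‖s x * f j x ^ 2 - s x * g x ^ 2‖ ≤
        (c : ℝ) * ‖((fun x => f j x ^ 2) - fun x => g x ^ 2) x‖
      simp only [Pi.sub_apply]
      rw [show s x * f j x ^ 2 - s x * g x ^ 2 = s x * (f j x ^ 2 - g x ^ 2) by ring,
        norm_mul]
      exact mul_le_mul_of_nonneg_right (hKc x) (norm_nonneg _)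
    · rw [ENNReal.smul_def, smul_eq_mul]
  have hmidt : Tendsto (fun j =>
      ((c : ℝ≥0∞) * eLpNorm ((fun x => f j x ^ 2) - fun x => g x ^ 2) 1 μ).toReal)
      atTop (nhds 0) := by
    have h1 : Tendsto (fun j =>
        (c : ℝ≥0∞) * eLpNorm ((fun x => f j x ^ 2) - fun x => g x ^ 2) 1 μ)
        atTop (nhds 0) := by
      have := ENNReal.Tendsto.const_mul (a := (c:ℝ≥0∞)) hL1 (Or.inr ENNReal.coe_ne_top)
      simpa using this
    have h2 := (ENNReal.tendsto_toReal (a := 0) (by simp)).comp h1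
    simpa [Function.comp_def] using h2
  have hev : ∀ᶠ j in atTop, ((c : ℝ≥0∞) *
      eLpNorm ((fun x => f j x ^ 2) - fun x => g x ^ 2) 1 μ).toReal < ε / 4 :=
    hmidt.eventually (gt_mem_nhds (by positivity))
  obtain ⟨N, hN⟩ := eventually_atTop.mp hev
  refine ⟨N, fun j hj => ?_⟩
  -- decompose the integrals
  have hd1 : ∫ x, a x * f j x ^ 2 ∂μ =
      (∫ x, (a x - s x) * f j x ^ 2 ∂μ) + ∫ x, s x * f j x ^ 2 ∂μ := by
    rw [← integral_add (hint (fun x => a x - s x) (ha.sub hsm) _ (hmemf j))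
      (hint _ hsm _ (hmemf j))]
    congr 1; funext x; ring
  have hd2 : ∫ x, a x * g x ^ 2 ∂μ =
      (∫ x, (a x - s x) * g x ^ 2 ∂μ) + ∫ x, s x * g x ^ 2 ∂μ := by
    rw [← integral_add (hint (fun x => a x - s x) (ha.sub hsm) _ hmemg)
      (hint _ hsm _ hmemg)]
    congr 1; funext x; ring
  have e1 : |∫ x, (a x - s x) * f j x ^ 2 ∂μ| ≤ ε / 4 := hterm _ (hmemf j) (hMf j)
  have e2 : |∫ x, (a x - s x) * g x ^ 2 ∂μ| ≤ ε / 4 := hterm _ hmemg hMg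
  have e3 : |∫ x, s x * f j x ^ 2 ∂μ - ∫ x, s x * g x ^ 2 ∂μ| < ε / 4 :=
    (hmidb j).trans_lt (hN j hj)
  set A := ∫ x, (a x - s x) * f j x ^ 2 ∂μ
  set B := ∫ x, s x * f j x ^ 2 ∂μ
  set A' := ∫ x, (a x - s x) * g x ^ 2 ∂μ
  set B' := ∫ x, s x * g x ^ 2 ∂μ
  rw [Real.dist_eq, hd1, hd2]
  have h4 : |A + B - (A' + B')| ≤ |A| + |A'| + |B - B'| := by
    rw [show A + B - (A' + B') = (A - A') + (B - B') by ring]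
    refine (abs_add_le _ _).trans ?_
    have := abs_sub A A'
    linarith
  exact lt_of_le_of_lt h4 (by linarith)

lemma abs_integral_le_toReal' {α : Type*} [MeasurableSpace α] {μ : Measure α} {F : α → ℝ}
    (hF : Integrable F μ) : |∫ x, F x ∂μ| ≤ (eLpNorm F 1 μ).toReal := by
  rw [← Real.norm_eq_abs]
  calc ‖∫ x, F x ∂μ‖ ≤ ∫ x, ‖F x‖ ∂μ := norm_integral_le_integral_norm _
  _ = (eLpNorm F 1 μ).toReal := by
      rw [eLpNorm_one_eq_lintegral_enorm, ← ofReal_integral_norm_eq_lintegral_enorm hF,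
        ENNReal.toReal_ofReal (by positivity)]

lemma ident {X : Type*} [MeasurableSpace X] {μ : Measure X} [IsFiniteMeasure μ]
    {H : Type*} [NormedAddCommGroup H] [InnerProductSpace ℝ H] [CompleteSpace H]
    (ι : H →ₗ[ℝ] (X → ℝ)) (hmeas : ∀ v, Measurable (ι v))
    {P : ℝ≥0∞} (hP2 : 2 ≤ P) (hP_top : P ≠ ∞)
    {C : ℝ} (hC : 0 < C) (hC2 : ∀ v, eLpNorm (ι v) P μ ≤ ENNReal.ofReal (C * ‖v‖))
    (u : ℕ → H) (uLim w : H)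
    (hweak : ∀ v : H, Tendsto (fun j => (inner ℝ (u j) v : ℝ)) atTop (nhds (inner ℝ uLim v)))
    {σ : ℕ → ℕ} (hσ : Tendsto σ atTop atTop)
    (hconv : Tendsto (fun j => eLpNorm (ι (u (σ j)) - ι w) 2 μ) atTop (nhds 0)) :
    ι w =ᵐ[μ] ι uLim := by
  have hP1 : (1:ℝ≥0∞) ≤ P := le_trans (by norm_num) hP2
  have hPtr : (1:ℝ) ≤ P.toReal := by
    rw [← ENNReal.toReal_one]
    exact ENNReal.toReal_mono hP_top hP1
  have hmemP : ∀ v : H, MemLp (ι v) P μ := fun v =>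
    ⟨(hmeas v).aestronglyMeasurable, lt_of_le_of_lt (hC2 v) ENNReal.ofReal_lt_top⟩
  have integ : ∀ v : H, Integrable (ι v) μ := fun v =>
    memLp_one_iff_integrable.mp ((hmemP v).mono_exponent hP1)
  have hmem2 : ∀ v : H, MemLp (ι v) 2 μ := fun v => (hmemP v).mono_exponent hP2
  set κ : ℝ≥0∞ := μ Set.univ ^ (1 / (1:ℝ≥0∞).toReal - 1 / P.toReal) with hκdef
  have hκ : κ ≠ ∞ := by
    refine ENNReal.rpow_ne_top_of_nonneg ?_ (measure_ne_top μ _)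
    simp only [ENNReal.toReal_one]
    have h1 : 1 / P.toReal ≤ 1 := by
      rw [div_le_one (by linarith)]; linarith
    linarith
  have hL1P : ∀ v : H, eLpNorm (ι v) 1 μ ≤ ENNReal.ofReal (C * ‖v‖) * κ := by
    intro v
    refine (eLpNorm_le_eLpNorm_mul_rpow_measure_univ hP1
      (hmeas v).aestronglyMeasurable).trans ?_
    exact mul_le_mul_left (hC2 v) κ
  set κ₂ : ℝ≥0∞ := μ Set.univ ^ (1 / (1:ℝ≥0∞).toReal - 1 / (2:ℝ≥0∞).toReal) with hκ₂def
  have hκ₂ : κ₂ ≠ ∞ := by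
    refine ENNReal.rpow_ne_top_of_nonneg ?_ (measure_ne_top μ _)
    simp only [ENNReal.toReal_one, ENNReal.toReal_ofNat]
    norm_num
  have hL12 : ∀ v : H, eLpNorm (ι v) 1 μ ≤ eLpNorm (ι v) 2 μ * κ₂ := fun v =>
    eLpNorm_le_eLpNorm_mul_rpow_measure_univ (by norm_num) (hmeas v).aestronglyMeasurable
  have hGintGen : ∀ G : X → ℝ, Measurable G → (∀ x, ‖G x‖ ≤ 1) → ∀ v : H,
      Integrable (fun x => G x * ι v x) μ := by
    intro G hGm hG1 v
    refine (integ v).mono ((hGm.mul (hmeas v)).aestronglyMeasurable)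
      (Eventually.of_forall fun x => ?_)
    rw [norm_mul]
    exact mul_le_of_le_one_left (norm_nonneg _) (hG1 x)
  have hkey : ∀ G : X → ℝ, Measurable G → (∀ x, ‖G x‖ ≤ 1) →
      ∫ x, G x * ι w x ∂μ = ∫ x, G x * ι uLim x ∂μ := by
    intro G hGm hG1
    have hGint := hGintGen G hGm hG1
    set φ : H →ₗ[ℝ] ℝ :=
      { toFun := fun v => ∫ x, G x * ι v x ∂μ
        map_add' := fun v v' => by
          rw [← integral_add (hGint v) (hGint v')]
          apply integral_congr_ae
          filter_upwards with x
          have hx : ι (v + v') x = ι v x + ι v' x := by rw [ι.map_add]; rfl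
          rw [hx]; ring
        map_smul' := fun c v => by
          simp only [RingHom.id_apply, smul_eq_mul]
          rw [← integral_const_mul]
          apply integral_congr_ae
          filter_upwards with x
          have hx : ι (c • v) x = c * ι v x := by rw [ι.map_smul]; rfl
          rw [hx]; ring } with hφdef
    have hφbound : ∀ v : H, ‖φ v‖ ≤ C * κ.toReal * ‖v‖ := by
      intro v
      have h1 : ‖φ v‖ = |∫ x, G x * ι v x ∂μ| := by rw [Real.norm_eq_abs]; rfl
      rw [h1]
      calc |∫ x, G x * ι v x ∂μ| ≤ (eLpNorm (fun x => G x * ι v x) 1 μ).toReal :=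
            abs_integral_le_toReal' (hGint v)
      _ ≤ (ENNReal.ofReal (C * ‖v‖) * κ).toReal := by
          apply ENNReal.toReal_mono (ENNReal.mul_ne_top ENNReal.ofReal_ne_top hκ)
          refine le_trans (eLpNorm_mono fun x => ?_) (hL1P v)
          rw [norm_mul]
          exact mul_le_of_le_one_left (norm_nonneg _) (hG1 x)
      _ = C * ‖v‖ * κ.toReal := by
          rw [ENNReal.toReal_mul, ENNReal.toReal_ofReal (by positivity)]
      _ = C * κ.toReal * ‖v‖ := by ring
    set φc : H →L[ℝ] ℝ := φ.mkContinuousOfExistsBound ⟨C * κ.toReal, hφbound⟩ with hφcdef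
    have hφc_apply : ∀ v : H, φc v = ∫ x, G x * ι v x ∂μ := fun v => rfl
    set z : H := (InnerProductSpace.toDual ℝ H).symm φc with hzdef
    have hz : ∀ v : H, φc v = (inner ℝ v z : ℝ) := by
      intro v
      rw [real_inner_comm]
      exact (InnerProductSpace.toDual_symm_apply).symm
    have h1 : Tendsto (fun j => φc (u (σ j))) atTop (nhds (φc uLim)) := by
      simp only [hz]
      exact (hweak z).comp hσ
    have h2 : Tendsto (fun j => φc (u (σ j))) atTop (nhds (φc w)) := by
      rw [tendsto_iff_dist_tendsto_zero]
      have hb : ∀ j, dist (φc (u (σ j))) (φc w) ≤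
          (eLpNorm (ι (u (σ j)) - ι w) 2 μ * κ₂).toReal := by
        intro j
        rw [dist_eq_norm, ← map_sub, Real.norm_eq_abs, hφc_apply]
        have hsub : ι (u (σ j) - w) = ι (u (σ j)) - ι w := ι.map_sub _ _
        calc |∫ x, G x * ι (u (σ j) - w) x ∂μ| ≤
            (eLpNorm (fun x => G x * ι (u (σ j) - w) x) 1 μ).toReal :=
              abs_integral_le_toReal' (hGint _)
        _ ≤ (eLpNorm (ι (u (σ j)) - ι w) 2 μ * κ₂).toReal := by
            apply ENNReal.toReal_mono
              (ENNReal.mul_ne_top ((hmem2 _).sub (hmem2 _)).2.ne hκ₂)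
            refine le_trans (eLpNorm_mono (g := ι (u (σ j) - w)) fun x => ?_) ?_
            · rw [norm_mul]
              exact mul_le_of_le_one_left (norm_nonneg _) (hG1 x)
            · rw [hsub]
              exact eLpNorm_le_eLpNorm_mul_rpow_measure_univ (by norm_num)
                (((hmeas _).sub (hmeas _)).aestronglyMeasurable)
      have ht : Tendsto (fun j => (eLpNorm (ι (u (σ j)) - ι w) 2 μ * κ₂).toReal)
          atTop (nhds 0) := by
        have hmul := ENNReal.Tendsto.mul_const hconv (Or.inr hκ₂)
        rw [zero_mul] at hmul
        have := (ENNReal.tendsto_toReal (a := 0) (by simp)).comp hmul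
        simpa [Function.comp_def] using this
      exact squeeze_zero (fun j => dist_nonneg) hb ht
    have heq : φc uLim = φc w := tendsto_nhds_unique h1 h2
    rw [← hφc_apply, ← hφc_apply]
    exact heq.symm
  -- choose the sign function
  set d : X → ℝ := fun x => ι w x - ι uLim x with hddef
  have hdm : Measurable d := (hmeas w).sub (hmeas uLim)
  set G : X → ℝ := fun x => if 0 ≤ d x then 1 else -1 with hGdef
  have hGm : Measurable G :=
    Measurable.ite (measurableSet_le measurable_const hdm) measurable_const measurable_const
  have hG1 : ∀ x, ‖G x‖ ≤ 1 := by
    intro x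
    by_cases h : 0 ≤ d x <;> simp [hGdef, h]
  have h0 := hkey G hGm hG1
  have hdint : Integrable d μ := (integ w).sub (integ uLim)
  have hGd : ∀ x, G x * d x = |d x| := by
    intro x
    by_cases h : 0 ≤ d x
    · simp [hGdef, h, abs_of_nonneg h]
    · simp [hGdef, h, abs_of_neg (lt_of_not_ge h)]
  have hzero : ∫ x, |d x| ∂μ = 0 := by
    have h1 : ∫ x, |d x| ∂μ = ∫ x, G x * d x ∂μ := by
      apply integral_congr_ae; filter_upwards with x; rw [hGd]
    have h2 : ∫ x, G x * d x ∂μ =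
        (∫ x, G x * ι w x ∂μ) - ∫ x, G x * ι uLim x ∂μ := by
      rw [← integral_sub (hGintGen G hGm hG1 w) (hGintGen G hGm hG1 uLim)]
      apply integral_congr_ae; filter_upwards with x
      simp only [hddef]; ring
    rw [h1, h2, h0, sub_self]
  have hae := (integral_eq_zero_iff_of_nonneg (fun x => abs_nonneg _) hdint.abs).mp hzero
  filter_upwards [hae] with x hx
  have : |d x| = 0 := hx
  have := abs_eq_zero.mp this
  simpa [hddef, sub_eq_zero] using this

/-- Weak sequential continuity of `u ↦ ∫_Ω a u²` on `X^{1,2}(Ω)`, modelled as a Hilbert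
space `H` whose elements are realized as functions via `ι`, continuously embedded in
`L^{2*}(Ω)` and compactly embedded in `L²(Ω)`. -/
theorem stmt_11 (n : ℕ) (hn : 3 ≤ n)
    (Ω : Set (EuclideanSpace ℝ (Fin n))) (hΩopen : IsOpen Ω)
    (hΩbdd : Bornology.IsBounded Ω)
    (a : EuclideanSpace ℝ (Fin n) → ℝ)
    (ha : MemLp a (ENNReal.ofReal ((n : ℝ) / 2)) (volume.restrict Ω))
    {H : Type*} [NormedAddCommGroup H] [InnerProductSpace ℝ H] [CompleteSpace H]
    (ι : H →ₗ[ℝ] (EuclideanSpace ℝ (Fin n) → ℝ))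
    (hmeas : ∀ v : H, Measurable (ι v))
    -- continuous embedding into L^{2*}(Ω), 2* = 2n/(n-2)
    (hcont : ∃ C : ℝ, 0 < C ∧ ∀ v : H,
      eLpNorm (ι v) (ENNReal.ofReal (2 * n / ((n : ℝ) - 2))) (volume.restrict Ω) ≤
        ENNReal.ofReal (C * ‖v‖))
    -- compact embedding into L²(Ω)
    (hcpt : ∀ v : ℕ → H, (∃ M : ℝ, ∀ j, ‖v j‖ ≤ M) →
      ∃ (σ : ℕ → ℕ) (w : H), StrictMono σ ∧
        Tendsto (fun j => eLpNorm (ι (v (σ j)) - ι w) 2 (volume.restrict Ω)) atTop (nhds 0))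
    (u : ℕ → H) (uLim : H)
    (hweak : ∀ v : H, Tendsto (fun j => (inner ℝ (u j) v : ℝ)) atTop (nhds (inner ℝ uLim v))) :
    Tendsto (fun j => ∫ x in Ω, a x * (ι (u j)) x ^ 2) atTop
      (nhds (∫ x in Ω, a x * (ι uLim) x ^ 2)) := by
  obtain ⟨C, hCpos, hC2⟩ := hcont
  set μ := volume.restrict Ω with hμdef
  haveI : IsFiniteMeasure μ := ⟨by
    rw [Measure.restrict_apply_univ]; exact hΩbdd.measure_lt_top⟩
  have hr3 : (3:ℝ) ≤ (n:ℝ) := by exact_mod_cast hn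
  have hr2 : (0:ℝ) < (n:ℝ) - 2 := by linarith
  have hrpos : (0:ℝ) < (n:ℝ) := by linarith
  set q : ℝ≥0∞ := ENNReal.ofReal ((n:ℝ)/2) with hqdef
  set P : ℝ≥0∞ := ENNReal.ofReal (2 * (n:ℝ) / ((n:ℝ) - 2)) with hPdef
  set p' : ℝ≥0∞ := ENNReal.ofReal ((n:ℝ)/((n:ℝ)-2)) with hp'def
  have hq_top : q ≠ ∞ := ENNReal.ofReal_ne_top
  have hqp : 1/q + 1/p' = 1 := by
    rw [hqdef, hp'def, one_div, one_div,
      ← ENNReal.ofReal_inv_of_pos (by positivity),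
      ← ENNReal.ofReal_inv_of_pos (by positivity),
      ← ENNReal.ofReal_add (by positivity) (by positivity),
      show ((n:ℝ)/2)⁻¹ + ((n:ℝ)/((n:ℝ)-2))⁻¹ = 1 by field_simp; try ring,
      ENNReal.ofReal_one]
  have hpp' : p' * ENNReal.ofReal 2 = P := by
    rw [hp'def, hPdef, ← ENNReal.ofReal_mul (by positivity)]
    congr 1
    field_simp
  have hP2 : (2:ℝ≥0∞) ≤ P := by
    rw [hPdef, show (2:ℝ≥0∞) = ENNReal.ofReal 2 by norm_num]
    apply ENNReal.ofReal_le_ofReal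
    rw [le_div_iff₀ hr2]; linarith
  have hP_top : P ≠ ∞ := ENNReal.ofReal_ne_top
  -- boundedness of the weakly convergent sequence
  have hbdd : ∃ B : ℝ, ∀ j, ‖u j‖ ≤ B := by
    have h0 : ∀ v : H, ∃ c : ℝ, ∀ j, ‖(innerSL ℝ (u j)) v‖ ≤ c := by
      intro v
      obtain ⟨c, hc⟩ := ((hweak v).norm).bddAbove_range
      exact ⟨c, fun j => hc ⟨j, rfl⟩⟩
    obtain ⟨B, hB⟩ := banach_steinhaus h0
    refine ⟨B, fun j => ?_⟩
    calc ‖u j‖ = ‖innerSL ℝ (u j)‖ := (innerSL_apply_norm (𝕜 := ℝ) (u j)).symm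
    _ ≤ B := hB j
  obtain ⟨B, hB⟩ := hbdd
  set B' : ℝ := max (max B 0) ‖uLim‖ with hB'def
  have hB'0 : 0 ≤ B' := le_trans (le_max_right B 0) (le_max_left _ _)
  have hB'B : ∀ j, ‖u j‖ ≤ B' := fun j =>
    le_trans (hB j) (le_trans (le_max_left B 0) (le_max_left _ _))
  set M : ℝ≥0∞ := (ENNReal.ofReal (C * B')) ^ (2:ℝ) with hMdef
  have hM_top : M ≠ ∞ := by
    rw [hMdef]
    exact ENNReal.rpow_ne_top_of_nonneg (by norm_num) ENNReal.ofReal_ne_top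
  have hsqb : ∀ v : H, ‖v‖ ≤ B' → eLpNorm (fun x => ι v x ^ 2) p' μ ≤ M := by
    intro v hv
    rw [sq_eLpNorm μ p' (ι v), hpp', hMdef]
    refine ENNReal.rpow_le_rpow ?_ (by norm_num)
    refine (hC2 v).trans (ENNReal.ofReal_le_ofReal ?_)
    exact mul_le_mul_of_nonneg_left hv hCpos.le
  -- subsequence argument
  refine tendsto_of_subseq_tendsto fun ns hns => ?_
  obtain ⟨σ, w, hσmono, hconv⟩ := hcpt (u ∘ ns) ⟨B, fun j => hB (ns j)⟩
  refine ⟨σ, ?_⟩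
  have hcomp : Tendsto (fun j => ns (σ j)) atTop atTop := hns.comp hσmono.tendsto_atTop
  have hwid : ι w =ᵐ[μ] ι uLim :=
    ident ι hmeas hP2 hP_top hCpos hC2 u uLim w hweak hcomp hconv
  have hL2' : Tendsto (fun j => eLpNorm (ι (u (ns (σ j))) - ι uLim) 2 μ) atTop (nhds 0) := by
    refine Tendsto.congr (fun j => ?_) hconv
    apply eLpNorm_congr_ae
    filter_upwards [hwid] with x hx
    simp only [Pi.sub_apply, Function.comp_apply, hx]
  exact core hq_top hqp ha (f := fun j => ι (u (ns (σ j)))) (g := ι uLim)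
    (fun j => (hmeas _).aestronglyMeasurable) ((hmeas _).aestronglyMeasurable) hM_top
    (fun j => hsqb _ (hB'B _)) (hsqb _ (le_max_right _ _)) hL2'
end
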